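/- The triple (Hk, ε, (·)*) is a comonad in Kleisli form on the category of pointed σ-structures: for every coKleisli morphism h : Hk(A,a) → (B,b) its extension h* : Hk(A,a) → Hk(B,b), defined by h*(⟨a,a₁,…,a_i⟩) = ⟨h(⟨a⟩), h(⟨a,a₁⟩), …, h(⟨a,a₁,…,a_i⟩)⟩, is a well-defined homomorphism, and the equations ε ∘ h* = h, ε* = id, and (g ∘ h*)* = g* ∘ h* hold. -/

import Mathlib

/-- A pointed structure over a unimodal vocabulary: unary predicates indexed by `ι`,
one transition relation `E`, and a distinguished point. -/
structure PStr (ι : Type) where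
  W : Type
  p : ι → W → Prop
  E : W → W → Prop
  pt : W

namespace PStr

variable {ι : Type}

/-- The universe of the hybrid comonad `Hk(A,a)`: nonempty plays of length ≤ k+1
starting at the distinguished point, in which every later element is seen (via `E`)
from some earlier element. -/
def Valid (A : PStr ι) (k : ℕ) (s : List A.W) : Prop :=
  s ≠ [] ∧ s.head? = some A.pt ∧ s.length ≤ k + 1 ∧
    ∀ j : Fin s.length, 0 < (j : ℕ) →
      ∃ i : Fin s.length, (i : ℕ) < (j : ℕ) ∧ A.E (s.get i) (s.get j)

/-- The last element of a play (the counit ε). -/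
def lastW (A : PStr ι) (s : List A.W) : A.W := s.getLast?.getD A.pt

/-- Lifting of a unary predicate to plays: it holds of the last element. -/
def liftP (A : PStr ι) (i : ι) (s : List A.W) : Prop := s ≠ [] ∧ A.p i (lastW A s)

/-- Lifting of the transition relation to plays: the plays are comparable in the
prefix order and `E` holds of their last elements. -/
def liftE (A : PStr ι) (s t : List A.W) : Prop :=
  (s <+: t ∨ t <+: s) ∧ s ≠ [] ∧ t ≠ [] ∧ A.E (lastW A s) (lastW A t)

end PStr


namespace PStr

variable {ι : Type}

/-- `h` is a coKleisli morphism `Hk(A,a) → (B,b)`, presented as a total function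
on lists subject to conditions on valid plays: it sends the distinguished play `⟨a⟩`
to the distinguished point, and preserves the lifted predicates and transition
relation. -/
def IsKleisli (A B : PStr ι) (k : ℕ) (h : List A.W → B.W) : Prop :=
  h [A.pt] = B.pt ∧
  (∀ s, Valid A k s → ∀ i, liftP A i s → B.p i (h s)) ∧
  (∀ s t, Valid A k s → Valid A k t → liftE A s t → B.E (h s) (h t))

/-- The coKleisli extension `h*`, sending a play to the list of values of `h` on its
nonempty prefixes: `h*(⟨a,a₁,…,a_i⟩) = ⟨h⟨a⟩, h⟨a,a₁⟩, …, h⟨a,a₁,…,a_i⟩⟩`. -/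
def ext (A : PStr ι) {β : Type} (h : List A.W → β) (s : List A.W) : List β :=
  (List.range s.length).map fun i => h (s.take (i + 1))

lemma ext_length (A : PStr ι) {β : Type} (h : List A.W → β) (s : List A.W) :
    (ext A h s).length = s.length := by simp [ext]

lemma ext_getElem (A : PStr ι) {β : Type} (h : List A.W → β) (s : List A.W) (i : ℕ)
    (hi : i < (ext A h s).length) : (ext A h s)[i] = h (s.take (i + 1)) := by
  simp [ext] at hi ⊢

lemma lastW_eq (A : PStr ι) (s : List A.W) (hs : s ≠ []) :
    lastW A s = s[s.length - 1]'(by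
      have := List.length_pos_iff.mpr hs; omega) := by
  rw [lastW, List.getLast?_eq_getElem?, List.getElem?_eq_getElem]
  rfl

lemma lastW_take (A : PStr ι) (s : List A.W) (i : ℕ) (hi : i < s.length) :
    lastW A (s.take (i + 1)) = s[i] := by
  have hlen : (s.take (i + 1)).length = i + 1 := by simp; omega
  have hne : s.take (i + 1) ≠ [] := by
    rw [← List.length_pos_iff, hlen]; omega
  rw [lastW_eq A _ hne]
  simp [hlen, List.getElem_take]

lemma ext_take (A : PStr ι) {β : Type} (h : List A.W → β) (s : List A.W) (n : ℕ) :
    ext A h (s.take n) = (ext A h s).take n := by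
  apply List.ext_getElem
  · simp [ext_length]
  · intro i h1 h2
    have h2' : i < n ∧ i < s.length := by
      rw [List.length_take, ext_length] at h2; omega
    rw [List.getElem_take, ext_getElem, ext_getElem, List.take_take,
      min_eq_left (by omega : i + 1 ≤ n)]

lemma ext_prefix (A : PStr ι) {β : Type} (h : List A.W → β) {s t : List A.W}
    (hst : s <+: t) : ext A h s <+: ext A h t := by
  rw [List.prefix_iff_eq_take] at hst ⊢
  rw [ext_length]
  conv_lhs => rw [hst]
  exact ext_take A h t s.length

lemma Valid.ne_nil {A : PStr ι} {k : ℕ} {s : List A.W} (hs : Valid A k s) : s ≠ [] := hs.1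

lemma Valid.take {A : PStr ι} {k : ℕ} {s : List A.W} (hs : Valid A k s) (n : ℕ) (hn : 0 < n) :
    Valid A k (s.take n) := by
  obtain ⟨h1, h2, h3, h4⟩ := hs
  have hpos := List.length_pos_iff.mpr h1
  have hlen : (s.take n).length = min n s.length := by simp
  refine ⟨?_, ?_, ?_, ?_⟩
  · rw [← List.length_pos_iff, hlen]; omega
  · rw [List.head?_eq_getElem?, List.getElem?_eq_getElem (by omega), List.getElem_take,
      ← List.getElem?_eq_getElem (by omega), ← List.head?_eq_getElem?]
    exact h2
  · rw [hlen]; omega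
  · intro j hj
    have hj' : (j : ℕ) < s.length := by have := j.2; omega
    obtain ⟨i, hij, hE⟩ := h4 ⟨j, hj'⟩ hj
    replace hij : (i : ℕ) < (j : ℕ) := hij
    have hj2 : (j : ℕ) < n ⊓ s.length := lt_of_lt_of_le j.2 (le_of_eq hlen)
    have hi' : (i : ℕ) < (s.take n).length := by rw [hlen]; omega
    refine ⟨⟨i, hi'⟩, hij, ?_⟩
    simpa [List.get_eq_getElem, List.getElem_take] using hE

lemma valid_take_one {A : PStr ι} {k : ℕ} {s : List A.W} (hs : Valid A k s) :
    s.take 1 = [A.pt] := by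
  obtain ⟨h1, h2, -, -⟩ := hs
  cases s with
  | nil => exact absurd rfl h1
  | cons a l => simp at h2; simp [h2]

lemma ext_ne_nil (A : PStr ι) {β : Type} (h : List A.W → β) {s : List A.W} (hs : s ≠ []) :
    ext A h s ≠ [] := by
  rw [← List.length_pos_iff, ext_length]
  exact List.length_pos_iff.mpr hs

lemma lastW_ext (A B : PStr ι) (h : List A.W → B.W) {s : List A.W} (hs : s ≠ []) :
    lastW B (ext A h s) = h s := by
  have hpos : 0 < s.length := List.length_pos_iff.mpr hs
  rw [lastW_eq B _ (ext_ne_nil A h hs), ext_getElem]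
  congr 1
  rw [ext_length]
  have : s.length - 1 + 1 = s.length := by omega
  rw [this, List.take_length]

/-- `(Hk, ε, (·)*)` is a comonad in Kleisli form on pointed σ-structures:
the counit ε is a morphism; for every coKleisli morphism `h : Hk(A,a) → (B,b)` the
extension `h* : Hk(A,a) → Hk(B,b)` is a well-defined homomorphism of pointed
structures; and ε ∘ h* = h, ε* = id, (g ∘ h*)* = g* ∘ h*. -/
theorem hybrid_comonad_in_kleisli_form (ι : Type) (k : ℕ) (hk : 0 < k) :
    -- ε is a coKleisli morphism Hk(A,a) → (A,a)
    (∀ A : PStr ι, IsKleisli A A k (lastW A)) ∧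
    -- h* is well defined and a morphism Hk(A,a) → Hk(B,b), and ε ∘ h* = h
    (∀ (A B : PStr ι) (h : List A.W → B.W), IsKleisli A B k h →
      (∀ s, Valid A k s → Valid B k (ext A h s)) ∧
      ext A h [A.pt] = [B.pt] ∧
      (∀ s, Valid A k s → ∀ i, liftP A i s → liftP B i (ext A h s)) ∧
      (∀ s t, Valid A k s → Valid A k t → liftE A s t →
        liftE B (ext A h s) (ext A h t)) ∧
      (∀ s, Valid A k s → lastW B (ext A h s) = h s)) ∧
    -- ε* = id
    (∀ (A : PStr ι) (s : List A.W), Valid A k s → ext A (lastW A) s = s) ∧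
    -- (g ∘ h*)* = g* ∘ h*
    (∀ (A B C : PStr ι) (h : List A.W → B.W) (g : List B.W → C.W),
      IsKleisli A B k h → IsKleisli B C k g →
      ∀ s, Valid A k s → ext A (fun u => g (ext A h u)) s = ext B g (ext A h s)) := by
  refine ⟨?_, ?_, ?_, ?_⟩
  · -- ε is Kleisli
    intro A
    exact ⟨by simp [lastW], fun s _ i hp => hp.2, fun s t _ _ he => he.2.2.2⟩
  · intro A B h hK
    obtain ⟨hpt, hp, hE⟩ := hK
    refine ⟨?_, ?_, ?_, ?_, fun s hs => lastW_ext A B h hs.ne_nil⟩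
    · -- well-definedness
      intro s hs
      have h1 := hs.ne_nil
      have hpos : 0 < s.length := List.length_pos_iff.mpr h1
      obtain ⟨-, h2, h3, h4⟩ := hs
      refine ⟨ext_ne_nil A h h1, ?_, ?_, ?_⟩
      · rw [List.head?_eq_getElem?,
          List.getElem?_eq_getElem (by rw [ext_length]; omega), ext_getElem,
          valid_take_one ⟨h1, h2, h3, h4⟩, hpt]
      · rw [ext_length]; exact h3
      · intro j hj
        have hj' : (j : ℕ) < s.length := by
          have := j.2; have := ext_length A h s; omega
        obtain ⟨i, hij, hAE⟩ := h4 ⟨j, hj'⟩ hj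
        replace hij : (i : ℕ) < (j : ℕ) := hij
        have hi' : (i : ℕ) < (ext A h s).length := by rw [ext_length]; omega
        refine ⟨⟨i, hi'⟩, hij, ?_⟩
        simp only [List.get_eq_getElem, ext_getElem]
        have htne : ∀ m : ℕ, m < s.length → s.take (m + 1) ≠ [] := fun m hm => by
          rw [← List.length_pos_iff, List.length_take]; omega
        refine hE _ _ (Valid.take ⟨h1, h2, h3, h4⟩ _ (by omega))
          (Valid.take ⟨h1, h2, h3, h4⟩ _ (by omega))
          ⟨Or.inl (List.take_prefix_take_left (by omega)),
           htne _ (by omega), htne _ hj', ?_⟩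
        rw [lastW_take A s i (by omega), lastW_take A s j hj']
        exact hAE
    · simp [ext, hpt]
    · -- liftP preserved
      intro s hs i hpi
      refine ⟨ext_ne_nil A h hs.ne_nil, ?_⟩
      rw [lastW_ext A B h hs.ne_nil]
      exact hp s hs i hpi
    · -- liftE preserved
      intro s t hs ht he
      refine ⟨he.1.imp (ext_prefix A h) (ext_prefix A h),
        ext_ne_nil A h hs.ne_nil, ext_ne_nil A h ht.ne_nil, ?_⟩
      rw [lastW_ext A B h hs.ne_nil, lastW_ext A B h ht.ne_nil]
      exact hE s t hs ht he
  · -- ε* = id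
    intro A s _
    apply List.ext_getElem (by rw [ext_length])
    intro i h1 h2
    rw [ext_getElem, lastW_take A s i h2]
  · -- comonad law
    intro A B C h g _ _ s _
    apply List.ext_getElem (by rw [ext_length, ext_length, ext_length])
    intro i h1 h2
    rw [ext_getElem, ext_getElem, ext_take]


end PStr
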